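/- (Core of the induction in Lemma 3.2.3: stability of weight decompositions under extensions.) Assume in addition that A and B are stable under extensions: whenever X → Y → Z → X[1] is a distinguished triangle with X, Z ∈ A then Y ∈ A, and likewise for B. Let K' → K → K'' → K'[1] be a distinguished triangle in D, and suppose there exist distinguished triangles A' → K' → B' → A'[1] and A'' → K'' → B'' → A''[1] with A', A'' ∈ A and B', B'' ∈ B. Then there exists a distinguished triangle A → K → B → A[1] with A ∈ A and B ∈ B. -/

import Mathlib

open CategoryTheory CategoryTheory.Limits CategoryTheory.Pretriangulated

universe v u

/-- core of the induction in Lemma 3.2.3: in a triangulated category `D` with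
strictly full shift-stable subcategories `A`, `B` such that `Hom(X, Y) = 0` for `X ∈ A`,
`Y ∈ B`, assume moreover that `A` and `B` are stable under extensions.  If
`K' → K → K'' → K'[1]` is a distinguished triangle and both `K'` and `K''` admit weight
decompositions (distinguished triangles `A' → K' → B' → A'[1]` and `A'' → K'' → B'' → A''[1]`
with `A', A'' ∈ A` and `B', B'' ∈ B`), then `K` admits a weight decomposition as well. -/
theorem weight_decomposition_extension
    {D : Type u} [Category.{v} D] [Preadditive D] [HasZeroObject D] [HasShift D ℤ]
    [∀ n : ℤ, (shiftFunctor D n).Additive] [Pretriangulated D] [IsTriangulated D]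
    (A B : D → Prop)
    (hAiso : ∀ ⦃X Y : D⦄, (X ≅ Y) → A X → A Y)
    (hBiso : ∀ ⦃X Y : D⦄, (X ≅ Y) → B X → B Y)
    (hAshift : ∀ X : D, A X → A (X⟦(1 : ℤ)⟧))
    (hAunshift : ∀ X : D, A X → A (X⟦(-1 : ℤ)⟧))
    (hBshift : ∀ X : D, B X → B (X⟦(1 : ℤ)⟧))
    (hBunshift : ∀ X : D, B X → B (X⟦(-1 : ℤ)⟧))
    (hAB : ∀ ⦃X Y : D⦄ (f : X ⟶ Y), A X → B Y → f = 0)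
    (hAext : ∀ (X Y Z : D) (f : X ⟶ Y) (g : Y ⟶ Z) (h : Z ⟶ X⟦(1 : ℤ)⟧),
      (Triangle.mk f g h ∈ distTriang D) → A X → A Z → A Y)
    (hBext : ∀ (X Y Z : D) (f : X ⟶ Y) (g : Y ⟶ Z) (h : Z ⟶ X⟦(1 : ℤ)⟧),
      (Triangle.mk f g h ∈ distTriang D) → B X → B Z → B Y)
    (K' K K'' : D) (u : K' ⟶ K) (v : K ⟶ K'') (w : K'' ⟶ K'⟦(1 : ℤ)⟧)
    (hT : Triangle.mk u v w ∈ distTriang D)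
    (A' B' : D) (hA' : A A') (hB' : B B')
    (f' : A' ⟶ K') (g' : K' ⟶ B') (h' : B' ⟶ A'⟦(1 : ℤ)⟧)
    (hT' : Triangle.mk f' g' h' ∈ distTriang D)
    (A'' B'' : D) (hA'' : A A'') (hB'' : B B'')
    (f'' : A'' ⟶ K'') (g'' : K'' ⟶ B'') (h'' : B'' ⟶ A''⟦(1 : ℤ)⟧)
    (hT'' : Triangle.mk f'' g'' h'' ∈ distTriang D) :
    ∃ (AK BK : D) (f : AK ⟶ K) (g : K ⟶ BK) (h : BK ⟶ AK⟦(1 : ℤ)⟧),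
      (Triangle.mk f g h ∈ distTriang D) ∧ A AK ∧ B BK := by
  open CategoryTheory.Triangulated in
  -- triangle K'' ⟶ K'⟦1⟧ ⟶ K⟦1⟧ ⟶ K''⟦1⟧ (double rotation of hT)
  have hrot2 : Triangle.mk w (-u⟦(1 : ℤ)⟧') (-v⟦(1 : ℤ)⟧') ∈ distTriang D :=
    rot_of_distTriang _ (rot_of_distTriang _ hT)
  -- triangle A'⟦1⟧ ⟶ K'⟦1⟧ ⟶ B'⟦1⟧ ⟶ A'⟦1⟧⟦1⟧ (triple rotation of hT')
  have hrot3 : Triangle.mk (-f'⟦(1 : ℤ)⟧') (-g'⟦(1 : ℤ)⟧') (-h'⟦(1 : ℤ)⟧') ∈ distTriang D :=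
    rot_of_distTriang _ (rot_of_distTriang _ (rot_of_distTriang _ hT'))
  -- factor a := f'' ≫ w through A'⟦1⟧
  have hzero : (f'' ≫ w) ≫ (-g'⟦(1 : ℤ)⟧') = 0 := by
    have h0 : (f'' ≫ w) ≫ g'⟦(1 : ℤ)⟧' = 0 := hAB _ hA'' (hBshift _ hB')
    rw [Preadditive.comp_neg, h0, neg_zero]
  obtain ⟨ψ, hψfac⟩ := Pretriangulated.Triangle.coyoneda_exact₂ _ hrot3 (f'' ≫ w) hzero
  obtain ⟨C, v13, w13, hC⟩ := Pretriangulated.distinguished_cocone_triangle (f'' ≫ w)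
  obtain ⟨AK₁, vψ, wψ, hψT⟩ := Pretriangulated.distinguished_cocone_triangle ψ
  have O1 := someOctahedron (u₁₂ := f'') (u₂₃ := w) rfl hT'' hrot2 hC
  have O2 := someOctahedron (u₁₂ := ψ) (u₂₃ := -f'⟦(1 : ℤ)⟧') hψfac.symm hψT hrot3 hC
  have hO1rot : Triangle.mk O1.m₃ ((-v⟦(1 : ℤ)⟧') ≫ g''⟦(1 : ℤ)⟧') (-(O1.m₁)⟦(1 : ℤ)⟧')
      ∈ distTriang D := rot_of_distTriang _ O1.mem
  obtain ⟨BK₁, v3, w3, hBK⟩ := Pretriangulated.distinguished_cocone_triangle (O2.m₁ ≫ O1.m₃)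
  have O3 := someOctahedron (u₁₂ := O2.m₁) (u₂₃ := O1.m₃) rfl O2.mem hO1rot hBK
  have hAK₁ : A AK₁ :=
    hAext _ _ _ _ _ _ (rot_of_distTriang _ hψT) (hAshift _ hA') (hAshift _ hA'')
  have hBK₁ : B BK₁ := hBext _ _ _ _ _ _ O3.mem (hBshift _ hB') (hBshift _ hB'')
  -- now shift the triangle AK₁ ⟶ K⟦1⟧ ⟶ BK₁ down by one
  have hTsh := Pretriangulated.Triangle.shift_distinguished _ hBK (-1)
  set S := (CategoryTheory.shiftFunctor (Triangle D) (-1 : ℤ)).obj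
    (Triangle.mk (O2.m₁ ≫ O1.m₃) v3 w3) with hS
  have e : (K⟦(1 : ℤ)⟧)⟦(-1 : ℤ)⟧ ≅ K :=
    (shiftFunctorCompIsoId D (1 : ℤ) (-1 : ℤ) (by norm_num)).app K
  refine ⟨AK₁⟦(-1 : ℤ)⟧, BK₁⟦(-1 : ℤ)⟧, S.mor₁ ≫ e.hom, e.inv ≫ S.mor₂, S.mor₃,
    ?_, hAunshift _ hAK₁, hBunshift _ hBK₁⟩
  refine Pretriangulated.isomorphic_distinguished _ hTsh _ ?_
  exact Pretriangulated.Triangle.isoMk _ _ (Iso.refl _) e.symm (Iso.refl _)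
    ((Category.assoc _ _ _).trans ((congrArg (S.mor₁ ≫ ·) e.hom_inv_id).trans
      ((Category.comp_id _).trans (Category.id_comp _).symm)))
    (Category.comp_id (e.inv ≫ S.mor₂))
    ((congrArg (S.mor₃ ≫ ·) (CategoryTheory.Functor.map_id _ _)).trans
      ((Category.comp_id _).trans (Category.id_comp _).symm))
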